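/- Let L be a topological group, M a compact open subgroup of L, G a dense subgroup of L, H = G ∩ M, V a finite-dimensional complex inner product space, and σ : M → B(V) a continuous group homomorphism taking values in the unitary operators on V, whose kernel is open in L. Define H_σ(L, M) to be the set of functions f : L → B(V) such that f(mxn) = σ(m) ∘ f(x) ∘ σ(n) for all m, n ∈ M and x ∈ L, and such that the set of double cosets MxM with f(x) ≠ 0 is finite; define H_{σ|H}(G, H) analogously using H and the restriction of σ to H. Then the restriction map f ↦ f|_G is a bijection from H_σ(L, M) onto H_{σ|H}(G, H). Moreover, if L is locally compact Hausdorff and μ is a left Haar measure on L normalized with μ(M) = 1, then for f, g ∈ H_σ(L, M) and x ∈ G one has ∫_L f(y) ∘ g(y⁻¹x) dμ(y) = Σ_{r ∈ R} f(r) ∘ g(r⁻¹x) for any set R ⊆ G containing exactly one element of each left coset rH of H in G (only finitely many terms of the sum being nonzero). -/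

import Mathlib

open MeasureTheory

/-- A function `f : L → B(V)` is a generalised Hecke-algebra element for the subgroup `M`
and the representation `σ : M → B(V)`: it is bi-`(M,σ)`-equivariant and supported on
finitely many double cosets `M x M`. -/
def IsHeckeFun {L : Type*} [Group L] {V : Type*} [NormedAddCommGroup V]
    [InnerProductSpace ℂ V] (M : Subgroup L) (σ : M →* (V →L[ℂ] V))
    (f : L → (V →L[ℂ] V)) : Prop :=
  (∀ (m n : M) (x : L), f ((m : L) * x * (n : L)) = σ m * f x * σ n) ∧
  ∃ F : Finset L, ∀ y : L, f y ≠ 0 → ∃ x ∈ F, ∃ m n : M, y = (m : L) * x * (n : L)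


namespace HeckeAux

variable {L : Type*} [Group L]
variable {V : Type*} [NormedAddCommGroup V] [InnerProductSpace ℂ V]

/-- The kernel set of `σ` inside `M`. -/
def ker' (M : Subgroup L) (σ : M →* (V →L[ℂ] V)) : Set L :=
  {x : L | ∃ h : x ∈ M, σ ⟨x, h⟩ = 1}

variable {M G : Subgroup L} {σ : M →* (V →L[ℂ] V)}

lemma ker'_mem_M {a : L} (h : a ∈ ker' M σ) : a ∈ M := by
  obtain ⟨hm, -⟩ := h; exact hm

lemma sigma_eq_one {a : L} (h : a ∈ ker' M σ) (ha : a ∈ M) : σ ⟨a, ha⟩ = 1 := by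
  obtain ⟨hm, he⟩ := h; exact he

lemma sigma_mul' {a b : L} (ha : a ∈ M) (hb : b ∈ M) (hab : a * b ∈ M) :
    σ ⟨a * b, hab⟩ = σ ⟨a, ha⟩ * σ ⟨b, hb⟩ := by
  have : (⟨a * b, hab⟩ : M) = ⟨a, ha⟩ * ⟨b, hb⟩ := rfl
  rw [this, map_mul]

lemma ker'_one : (1 : L) ∈ ker' M σ := ⟨M.one_mem, map_one σ⟩

lemma ker'_mul {a b : L} (ha : a ∈ ker' M σ) (hb : b ∈ ker' M σ) : a * b ∈ ker' M σ := by
  refine ⟨mul_mem (ker'_mem_M ha) (ker'_mem_M hb), ?_⟩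
  rw [sigma_mul' (ker'_mem_M ha) (ker'_mem_M hb), sigma_eq_one ha, sigma_eq_one hb, one_mul]

lemma ker'_inv {a : L} (ha : a ∈ ker' M σ) : a⁻¹ ∈ ker' M σ := by
  have hm : a⁻¹ ∈ M := inv_mem (ker'_mem_M ha)
  refine ⟨hm, ?_⟩
  have h1 : σ ⟨a⁻¹ * a, mul_mem hm (ker'_mem_M ha)⟩ = σ ⟨a⁻¹, hm⟩ * σ ⟨a, ker'_mem_M ha⟩ :=
    sigma_mul' hm (ker'_mem_M ha) _
  have h2 : (⟨a⁻¹ * a, mul_mem hm (ker'_mem_M ha)⟩ : M) = 1 := by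
    ext; simp
  rw [h2, map_one, sigma_eq_one ha, mul_one] at h1
  exact h1.symm

section Top

variable [TopologicalSpace L] [IsTopologicalGroup L]

lemma exists_repG (hG : Dense (G : Set L)) (hker : IsOpen (ker' M σ)) (x : L) :
    ∃ g, g ∈ G ∧ x⁻¹ * g ∈ ker' M σ := by
  have hU : IsOpen {y : L | x⁻¹ * y ∈ ker' M σ} := hker.preimage (continuous_const.mul continuous_id)
  have hne : Set.Nonempty {y : L | x⁻¹ * y ∈ ker' M σ} := ⟨x, by simpa using (ker'_one : (1:L) ∈ ker' M σ)⟩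
  obtain ⟨g, hgG, hg⟩ := hG.exists_mem_open hU hne
  exact ⟨g, hgG, hg⟩

lemma keyDecomp (hG : Dense (G : Set L)) (hker : IsOpen (ker' M σ)) (x : L) (m n : M)
    (ν : L) (hν : ν ∈ ker' M σ) :
    ∃ a b : M, (a : L) ∈ G ∧ (b : L) ∈ G ∧ σ a = σ m ∧ σ b = σ n ∧
      x⁻¹ * ((a : L)⁻¹ * ((m : L) * x * (n : L) * ν) * (b : L)⁻¹) ∈ ker' M σ := by
  -- first approximant
  have hU1 : IsOpen {y : L | (m : L)⁻¹ * y ∈ ker' M σ ∧ x⁻¹ * ((m : L)⁻¹ * y) * x ∈ ker' M σ} := by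
    refine IsOpen.inter (hker.preimage ?_) (hker.preimage ?_) <;> fun_prop
  have hm1 : (m : L) ∈ {y : L | (m : L)⁻¹ * y ∈ ker' M σ ∧ x⁻¹ * ((m : L)⁻¹ * y) * x ∈ ker' M σ} := by
    constructor
    · simpa using (ker'_one : (1:L) ∈ ker' M σ)
    · have : x⁻¹ * ((m : L)⁻¹ * (m : L)) * x = 1 := by group
      rw [this]; exact ker'_one
  obtain ⟨a₀, ha₀G, hω, hωx⟩ := hG.exists_mem_open hU1 ⟨m, hm1⟩
  -- second approximant
  have hU2 : IsOpen {y : L | (n : L)⁻¹ * y ∈ ker' M σ ∧ (n : L) * (((n : L)⁻¹ * y) * ν⁻¹) * (n : L)⁻¹ ∈ ker' M σ} := by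
    refine IsOpen.inter (hker.preimage ?_) (hker.preimage ?_) <;> fun_prop
  have hn1 : (n : L) * ν ∈ {y : L | (n : L)⁻¹ * y ∈ ker' M σ ∧ (n : L) * (((n : L)⁻¹ * y) * ν⁻¹) * (n : L)⁻¹ ∈ ker' M σ} := by
    constructor
    · have : (n : L)⁻¹ * ((n : L) * ν) = ν := by group
      rw [this]; exact hν
    · have : (n : L) * (((n : L)⁻¹ * ((n : L) * ν)) * ν⁻¹) * (n : L)⁻¹ = 1 := by group
      rw [this]; exact ker'_one
  obtain ⟨b₀, hb₀G, hρ, hρ2⟩ := hG.exists_mem_open hU2 ⟨(n : L) * ν, hn1⟩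
  -- memberships in M
  have haM : a₀ ∈ M := by
    have : a₀ = (m : L) * ((m : L)⁻¹ * a₀) := by group
    rw [this]; exact mul_mem m.2 (ker'_mem_M hω)
  have hbM : b₀ ∈ M := by
    have : b₀ = (n : L) * ((n : L)⁻¹ * b₀) := by group
    rw [this]; exact mul_mem n.2 (ker'_mem_M hρ)
  refine ⟨⟨a₀, haM⟩, ⟨b₀, hbM⟩, ha₀G, hb₀G, ?_, ?_, ?_⟩
  · have h1 : σ ⟨a₀, haM⟩ = σ ⟨(m : L) * ((m : L)⁻¹ * a₀), mul_mem m.2 (ker'_mem_M hω)⟩ := by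
      congr 1; ext; group
    rw [h1, sigma_mul' m.2 (ker'_mem_M hω), sigma_eq_one hω, mul_one]
  · have h1 : σ ⟨b₀, hbM⟩ = σ ⟨(n : L) * ((n : L)⁻¹ * b₀), mul_mem n.2 (ker'_mem_M hρ)⟩ := by
      congr 1; ext; group
    rw [h1, sigma_mul' n.2 (ker'_mem_M hρ), sigma_eq_one hρ, mul_one]
  · have key : x⁻¹ * (a₀⁻¹ * ((m : L) * x * (n : L) * ν) * b₀⁻¹)
        = (x⁻¹ * ((m : L)⁻¹ * a₀) * x)⁻¹ * ((n : L) * (((n : L)⁻¹ * b₀) * ν⁻¹) * (n : L)⁻¹)⁻¹ := by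
      group
    rw [show ((⟨a₀, haM⟩ : M) : L) = a₀ from rfl, show ((⟨b₀, hbM⟩ : M) : L) = b₀ from rfl, key]
    exact ker'_mul (ker'_inv hωx) (ker'_inv hρ2)

end Top

lemma hecke_rep {f : L → (V →L[ℂ] V)} (hf : IsHeckeFun M σ f) {x gg : L}
    (hgN : x⁻¹ * gg ∈ ker' M σ) : f gg = f x := by
  have hm : x⁻¹ * gg ∈ M := ker'_mem_M hgN
  have hx : gg = ((1 : M) : L) * x * ((⟨x⁻¹ * gg, hm⟩ : M) : L) := by
    simp only [OneMemClass.coe_one]; group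
  rw [hx, hf.1 1 ⟨x⁻¹ * gg, hm⟩ x, map_one, sigma_eq_one hgN hm, one_mul, mul_one]

lemma coset_const {f g : L → (V →L[ℂ] V)} (hf : IsHeckeFun M σ f) (hg : IsHeckeFun M σ g)
    (x y : L) (m : M) :
    f (y * (m : L)) * g ((y * (m : L))⁻¹ * x) = f y * g (y⁻¹ * x) := by
  have h1 : f (y * (m : L)) = f y * σ m := by
    have : y * (m : L) = ((1 : M) : L) * y * (m : L) := by
      simp only [OneMemClass.coe_one]; group
    rw [this, hf.1 1 m y, map_one, one_mul]
  have h2 : g ((y * (m : L))⁻¹ * x) = σ m⁻¹ * g (y⁻¹ * x) := by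
    have : (y * (m : L))⁻¹ * x = ((m⁻¹ : M) : L) * (y⁻¹ * x) * ((1 : M) : L) := by
      simp only [OneMemClass.coe_one, Subgroup.coe_inv]; group
    rw [this, hg.1 m⁻¹ 1 (y⁻¹ * x), map_one, mul_one]
  rw [h1, h2, mul_assoc, ← mul_assoc (σ m), ← map_mul, mul_inv_cancel, map_one, one_mul]

section Top2

variable [TopologicalSpace L] [IsTopologicalGroup L]

lemma cover_cosets (hMc : IsCompact (M : Set L)) (hMo : IsOpen (M : Set L)) (x : L) :
    ∃ t : Finset L, ∀ y : L, (∃ m n : M, y = (m : L) * x * (n : L)) →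
      ∃ z ∈ t, z⁻¹ * y ∈ M := by
  have hS : IsCompact ((· * x) '' (M : Set L)) := hMc.image (continuous_id.mul continuous_const)
  have hUo : ∀ z : L, IsOpen {y : L | z⁻¹ * y ∈ M} := fun z =>
    hMo.preimage (continuous_const.mul continuous_id)
  have hcov : (· * x) '' (M : Set L) ⊆ ⋃ z : L, {y : L | z⁻¹ * y ∈ M} := by
    intro s _
    exact Set.mem_iUnion.2 ⟨s, by simpa using M.one_mem⟩
  obtain ⟨t, ht⟩ := hS.elim_finite_subcover _ hUo hcov
  refine ⟨t, ?_⟩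
  rintro y ⟨m, n, rfl⟩
  have hmem : (m : L) * x ∈ (· * x) '' (M : Set L) := ⟨m, m.2, rfl⟩
  obtain ⟨z, hzt, hz⟩ := Set.mem_iUnion₂.1 (ht hmem)
  refine ⟨z, hzt, ?_⟩
  have : z⁻¹ * ((m : L) * x * (n : L)) = (z⁻¹ * ((m : L) * x)) * (n : L) := by group
  rw [this]
  exact mul_mem hz n.2

end Top2

end HeckeAux
/-- Let `L` be a topological group, `M` a compact open subgroup, `G` a
dense subgroup, `H = G ⊓ M`, and `σ : M → B(V)` a continuous unitary representation on a
finite-dimensional complex inner product space whose kernel is open in `L`.  Then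
restriction `f ↦ f|_G` is a bijection from `H_σ(L, M)` onto `H_{σ|H}(G, H)`.  Moreover, if
`L` is locally compact Hausdorff and `μ` is a left Haar measure with `μ M = 1`, then for
`f, g ∈ H_σ(L, M)` and `x ∈ G`, the convolution `∫ f(y) ∘ g(y⁻¹ x) dμ(y)` equals the finite
sum `Σ_{r ∈ R} f r ∘ g (r⁻¹ x)` over any set `R ⊆ G` of representatives of the left cosets
of `H` in `G`. -/
theorem stmt_2 {L : Type*} [Group L] [TopologicalSpace L] [IsTopologicalGroup L]
    [LocallyCompactSpace L] [T2Space L] [MeasurableSpace L] [BorelSpace L]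
    {V : Type*} [NormedAddCommGroup V] [InnerProductSpace ℂ V] [FiniteDimensional ℂ V]
    (M G : Subgroup L) (hMc : IsCompact (M : Set L)) (hMo : IsOpen (M : Set L))
    (hG : Dense (G : Set L))
    (σ : M →* (V →L[ℂ] V)) (hσc : Continuous σ) (hσu : ∀ m : M, σ m ∈ unitary (V →L[ℂ] V))
    (hker : IsOpen {x : L | ∃ h : x ∈ M, σ ⟨x, h⟩ = 1})
    (σ' : ((G ⊓ M).subgroupOf G) →* (V →L[ℂ] V))
    (hσ' : ∀ h : (G ⊓ M).subgroupOf G,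
      σ' h = σ ⟨((h : G) : L), (Subgroup.mem_inf.mp (Subgroup.mem_subgroupOf.mp h.2)).2⟩)
    (μ : Measure L) [μ.IsHaarMeasure] (hμM : μ (M : Set L) = 1) :
    Set.BijOn (fun (f : L → (V →L[ℂ] V)) => fun g : G => f (g : L))
      {f | IsHeckeFun M σ f} {f | IsHeckeFun ((G ⊓ M).subgroupOf G) σ' f} ∧
    (∀ f g : L → (V →L[ℂ] V), IsHeckeFun M σ f → IsHeckeFun M σ g →
      ∀ x : L, x ∈ G → ∀ R : Set L, R ⊆ (G : Set L) →
        (∀ y ∈ G, ∃! r : L, r ∈ R ∧ r⁻¹ * y ∈ G ⊓ M) →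
        {r ∈ R | f r * g (r⁻¹ * x) ≠ 0}.Finite ∧
        ∫ y, f y * g (y⁻¹ * x) ∂μ = ∑ᶠ r ∈ R, f r * g (r⁻¹ * x)) := by
  classical
  have hkerK : IsOpen (HeckeAux.ker' M σ) := hker
  constructor
  · -- Part A : bijection
    refine ⟨?_, ?_, ?_⟩
    · -- MapsTo
      intro f hf
      refine ⟨?_, ?_⟩
      · intro m n y
        have hmM : ((m : G) : L) ∈ M := (Subgroup.mem_inf.mp (Subgroup.mem_subgroupOf.mp m.2)).2
        have hnM : ((n : G) : L) ∈ M := (Subgroup.mem_inf.mp (Subgroup.mem_subgroupOf.mp n.2)).2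
        have h1 := hf.1 ⟨((m : G) : L), hmM⟩ ⟨((n : G) : L), hnM⟩ (y : L)
        show f ((((m : G) * y * (n : G) : G) : L)) = σ' m * f (y : L) * σ' n
        rw [hσ' m, hσ' n]
        exact h1
      · obtain ⟨F, hF⟩ := hf.2
        have hch : ∀ xx : L, ∃ gx : L, gx ∈ G ∧ ∃ m n : M, gx = (m : L) * xx * (n : L) := by
          intro xx
          obtain ⟨g0, hg0G, hg0N⟩ := HeckeAux.exists_repG hG hkerK xx
          refine ⟨g0, hg0G, 1, ⟨xx⁻¹ * g0, HeckeAux.ker'_mem_M hg0N⟩, ?_⟩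
          show g0 = 1 * xx * (xx⁻¹ * g0)
          group
        choose c hcG m₁ n₁ hceq using hch
        refine ⟨F.image (fun xx => (⟨c xx, hcG xx⟩ : G)), ?_⟩
        intro y hy
        obtain ⟨xx, hxF, m, n, hyeq⟩ := hF (y : L) hy
        obtain ⟨a, b, haG, hbG, -, -, hk⟩ := HeckeAux.keyDecomp hG hkerK (c xx)
          (m * (m₁ xx)⁻¹) ((n₁ xx)⁻¹ * n) 1 HeckeAux.ker'_one
        have hmid : ((m * (m₁ xx)⁻¹ : M) : L) * (c xx) * (((n₁ xx)⁻¹ * n : M) : L) * 1 = (y : L) := by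
          push_cast
          rw [hceq xx, hyeq]
          group
        rw [hmid] at hk
        have hκG : (c xx)⁻¹ * ((a : L)⁻¹ * (y : L) * (b : L)⁻¹) ∈ G :=
          mul_mem (inv_mem (hcG xx)) (mul_mem (mul_mem (inv_mem haG) y.2) (inv_mem hbG))
        refine ⟨⟨c xx, hcG xx⟩, Finset.mem_image_of_mem _ hxF,
          ⟨⟨(a : L), haG⟩, Subgroup.mem_subgroupOf.2 (Subgroup.mem_inf.2 ⟨haG, a.2⟩)⟩,
          ⟨⟨((c xx)⁻¹ * ((a : L)⁻¹ * (y : L) * (b : L)⁻¹)) * (b : L), mul_mem hκG hbG⟩,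
            Subgroup.mem_subgroupOf.2 (Subgroup.mem_inf.2 ⟨mul_mem hκG hbG,
              mul_mem (HeckeAux.ker'_mem_M hk) b.2⟩)⟩, ?_⟩
        apply Subtype.ext
        show (y : L) = (a : L) * (c xx) * (((c xx)⁻¹ * ((a : L)⁻¹ * (y : L) * (b : L)⁻¹)) * (b : L))
        group
    · -- InjOn
      intro f hf f' hf' heq
      funext xx
      obtain ⟨g0, hg0G, hg0N⟩ := HeckeAux.exists_repG hG hkerK xx
      have h1 : f g0 = f xx := HeckeAux.hecke_rep hf hg0N
      have h2 : f' g0 = f' xx := HeckeAux.hecke_rep hf' hg0N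
      have h3 : f g0 = f' g0 := congrFun heq ⟨g0, hg0G⟩
      rw [← h1, ← h2, h3]
    · -- SurjOn
      intro f₀ hf₀
      choose rep hrepG hrepN using fun xx : L => HeckeAux.exists_repG hG hkerK xx
      set fe : L → (V →L[ℂ] V) := fun xx => f₀ ⟨rep xx, hrepG xx⟩ with hfe
      have hwd : ∀ (xx : L) (g0 : G), xx⁻¹ * (g0 : L) ∈ HeckeAux.ker' M σ → fe xx = f₀ g0 := by
        intro xx g0 hg0
        have hk : (rep xx)⁻¹ * (g0 : L) ∈ HeckeAux.ker' M σ := by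
          have he : (rep xx)⁻¹ * (g0 : L) = (xx⁻¹ * rep xx)⁻¹ * (xx⁻¹ * (g0 : L)) := by group
          rw [he]; exact HeckeAux.ker'_mul (HeckeAux.ker'_inv (hrepN xx)) hg0
        have hη : ((⟨rep xx, hrepG xx⟩ : G)⁻¹ * g0) ∈ (G ⊓ M).subgroupOf G :=
          Subgroup.mem_subgroupOf.2 (Subgroup.mem_inf.2 ⟨SetLike.coe_mem _, HeckeAux.ker'_mem_M hk⟩)
        have h1 := hf₀.1 1 ⟨_, hη⟩ ⟨rep xx, hrepG xx⟩
        have h2 : (((1 : (G ⊓ M).subgroupOf G) : G)) * (⟨rep xx, hrepG xx⟩ : G) *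
            ((⟨_, hη⟩ : (G ⊓ M).subgroupOf G) : G) = g0 := by
          apply Subtype.ext
          show 1 * rep xx * ((rep xx)⁻¹ * (g0 : L)) = (g0 : L)
          group
        have h3 : σ' ⟨_, hη⟩ = 1 := by
          rw [hσ']
          exact HeckeAux.sigma_eq_one hk _
        rw [h2, map_one, one_mul, h3, mul_one] at h1
        exact h1.symm
      have hfeH : IsHeckeFun M σ fe := by
        constructor
        · intro m n xx
          have hν : ((m : L) * xx * (n : L))⁻¹ * rep ((m : L) * xx * (n : L)) ∈ HeckeAux.ker' M σ :=
            hrepN _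
          obtain ⟨a, b, haG, hbG, hsa, hsb, hk⟩ := HeckeAux.keyDecomp hG hkerK xx m n
            (((m : L) * xx * (n : L))⁻¹ * rep ((m : L) * xx * (n : L))) hν
          have hsimp : (m : L) * xx * (n : L) *
              (((m : L) * xx * (n : L))⁻¹ * rep ((m : L) * xx * (n : L)))
              = rep ((m : L) * xx * (n : L)) := by group
          rw [hsimp] at hk
          have hg'G : rep ((m : L) * xx * (n : L)) ∈ G := hrepG _
          have hg₁G : (a : L)⁻¹ * rep ((m : L) * xx * (n : L)) * (b : L)⁻¹ ∈ G :=
            mul_mem (mul_mem (inv_mem haG) hg'G) (inv_mem hbG)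
          have h1 : fe xx = f₀ ⟨(a : L)⁻¹ * rep ((m : L) * xx * (n : L)) * (b : L)⁻¹, hg₁G⟩ :=
            hwd xx _ hk
          have haH : (⟨(a : L), haG⟩ : G) ∈ (G ⊓ M).subgroupOf G :=
            Subgroup.mem_subgroupOf.2 (Subgroup.mem_inf.2 ⟨haG, a.2⟩)
          have hbH : (⟨(b : L), hbG⟩ : G) ∈ (G ⊓ M).subgroupOf G :=
            Subgroup.mem_subgroupOf.2 (Subgroup.mem_inf.2 ⟨hbG, b.2⟩)
          have h2 := hf₀.1 ⟨_, haH⟩ ⟨_, hbH⟩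
            ⟨(a : L)⁻¹ * rep ((m : L) * xx * (n : L)) * (b : L)⁻¹, hg₁G⟩
          have h3 : ((⟨_, haH⟩ : (G ⊓ M).subgroupOf G) : G) *
              (⟨(a : L)⁻¹ * rep ((m : L) * xx * (n : L)) * (b : L)⁻¹, hg₁G⟩ : G) *
              ((⟨_, hbH⟩ : (G ⊓ M).subgroupOf G) : G) = ⟨rep ((m : L) * xx * (n : L)), hg'G⟩ := by
            apply Subtype.ext
            show (a : L) * ((a : L)⁻¹ * rep ((m : L) * xx * (n : L)) * (b : L)⁻¹) * (b : L)
              = rep ((m : L) * xx * (n : L))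
            group
          rw [h3] at h2
          have h4a : σ' ⟨_, haH⟩ = σ m := by rw [hσ']; exact hsa
          have h4b : σ' ⟨_, hbH⟩ = σ n := by rw [hσ']; exact hsb
          have h5 : fe ((m : L) * xx * (n : L)) = f₀ ⟨rep ((m : L) * xx * (n : L)), hg'G⟩ := rfl
          rw [h5, h2, h4a, h4b, ← h1]
        · obtain ⟨F, hF⟩ := hf₀.2
          refine ⟨F.image (fun z : G => (z : L)), ?_⟩
          intro y hy
          have hy' : f₀ ⟨rep y, hrepG y⟩ ≠ 0 := hy
          obtain ⟨z, hzF, m, n, hzeq⟩ := hF ⟨rep y, hrepG y⟩ hy'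
          have hmM : ((m : G) : L) ∈ M := (Subgroup.mem_inf.mp (Subgroup.mem_subgroupOf.mp m.2)).2
          have hnM : ((n : G) : L) ∈ M := (Subgroup.mem_inf.mp (Subgroup.mem_subgroupOf.mp n.2)).2
          have hLeq : rep y = ((m : G) : L) * (z : L) * ((n : G) : L) :=
            congrArg (fun t : G => (t : L)) hzeq
          have hτ : (rep y)⁻¹ * y ∈ HeckeAux.ker' M σ := by
            have he : (rep y)⁻¹ * y = (y⁻¹ * rep y)⁻¹ := by group
            rw [he]; exact HeckeAux.ker'_inv (hrepN y)
          refine ⟨(z : L), Finset.mem_image_of_mem _ hzF, ⟨((m : G) : L), hmM⟩,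
            ⟨((n : G) : L) * ((rep y)⁻¹ * y), mul_mem hnM (HeckeAux.ker'_mem_M hτ)⟩, ?_⟩
          show y = ((m : G) : L) * (z : L) * (((n : G) : L) * ((rep y)⁻¹ * y))
          rw [show ((m : G) : L) * (z : L) * (((n : G) : L) * ((rep y)⁻¹ * y))
              = (((m : G) : L) * (z : L) * ((n : G) : L)) * ((rep y)⁻¹ * y) from by group, ← hLeq]
          group
      refine ⟨fe, hfeH, ?_⟩
      funext g0
      exact hwd (g0 : L) g0 (by rw [inv_mul_cancel]; exact HeckeAux.ker'_one)
  · -- Part B : convolution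
    intro f g hf hg x hxG R hRG hR
    have uniq : ∀ r ∈ R, ∀ r' ∈ R, r⁻¹ * r' ∈ M → r = r' := by
      intro r hr r' hr' hM'
      obtain ⟨r₀, -, hu⟩ := hR r' (hRG hr')
      have h1 : r = r₀ := hu r ⟨hr, Subgroup.mem_inf.2 ⟨mul_mem (inv_mem (hRG hr)) (hRG hr'), hM'⟩⟩
      have h2 : r' = r₀ := hu r' ⟨hr', by rw [inv_mul_cancel]; exact Subgroup.one_mem _⟩
      rw [h1, h2]
    have hryE : ∀ y : L, ∃ r : L, r ∈ R ∧ r⁻¹ * y ∈ M ∧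
        ∀ r' : L, r' ∈ R → r'⁻¹ * y ∈ M → r' = r := by
      intro y
      obtain ⟨gy, hgyG, hgyN⟩ := HeckeAux.exists_repG hG hkerK y
      obtain ⟨r, ⟨hrR, hrGM⟩, -⟩ := hR gy hgyG
      have hrM : r⁻¹ * y ∈ M := by
        have he : r⁻¹ * y = (r⁻¹ * gy) * (y⁻¹ * gy)⁻¹ := by group
        rw [he]
        exact mul_mem (Subgroup.mem_inf.mp hrGM).2 (inv_mem (HeckeAux.ker'_mem_M hgyN))
      refine ⟨r, hrR, hrM, fun r' hr1 hr2 => uniq r' hr1 r hrR ?_⟩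
      have he : r'⁻¹ * r = (r'⁻¹ * y) * (r⁻¹ * y)⁻¹ := by group
      rw [he]; exact mul_mem hr2 (inv_mem hrM)
    choose ry hry1 hry2 hry3 using hryE
    have hconst : ∀ y : L, f y * g (y⁻¹ * x) = f (ry y) * g ((ry y)⁻¹ * x) := by
      intro y
      have h := HeckeAux.coset_const hf hg x (ry y) ⟨(ry y)⁻¹ * y, hry2 y⟩
      have hy : ry y * ((⟨(ry y)⁻¹ * y, hry2 y⟩ : M) : L) = y := by
        show ry y * ((ry y)⁻¹ * y) = y
        group
      rw [hy] at h
      exact h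
    obtain ⟨Ff, hFf⟩ := hf.2
    choose t ht using fun xi : L => HeckeAux.cover_cosets hMc hMo xi
    have hTsub : (R ∩ Function.support (fun r => f r * g (r⁻¹ * x))) ⊆
        ⋃ xi ∈ (Ff : Set L), ⋃ z ∈ (t xi : Set L), {r : L | r ∈ R ∧ z⁻¹ * r ∈ M} := by
      rintro r ⟨hrR, hrsupp⟩
      have hfr : f r ≠ 0 := by
        intro h0
        apply hrsupp
        show f r * g (r⁻¹ * x) = 0
        rw [h0, zero_mul]
      obtain ⟨xi, hxi, m, n, hreq⟩ := hFf r hfr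
      obtain ⟨z, hz, hzM⟩ := ht xi r ⟨m, n, hreq⟩
      exact Set.mem_biUnion hxi (Set.mem_biUnion hz ⟨hrR, hzM⟩)
    have hTfin : (R ∩ Function.support (fun r => f r * g (r⁻¹ * x))).Finite := by
      refine Set.Finite.subset (Set.Finite.biUnion Ff.finite_toSet fun xi _ =>
        Set.Finite.biUnion (t xi).finite_toSet fun z _ => Set.Subsingleton.finite ?_) hTsub
      rintro r ⟨hr, hrz⟩ r' ⟨hr', hrz'⟩
      refine uniq r hr r' hr' ?_
      have he : r⁻¹ * r' = (z⁻¹ * r)⁻¹ * (z⁻¹ * r') := by group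
      rw [he]; exact mul_mem (inv_mem hrz) hrz'
    have hmemT' : ∀ r : L, r ∈ hTfin.toFinset ↔ r ∈ R ∧ f r * g (r⁻¹ * x) ≠ 0 := by
      intro r
      rw [Set.Finite.mem_toFinset]
      exact Iff.rfl
    have hdec : ∀ y : L, f y * g (y⁻¹ * x) =
        ∑ r ∈ hTfin.toFinset, Set.indicator {w : L | r⁻¹ * w ∈ M}
          (fun _ => f r * g (r⁻¹ * x)) y := by
      intro y
      have hme : y ∈ {w : L | (ry y)⁻¹ * w ∈ M} := hry2 y
      by_cases hmem : ry y ∈ hTfin.toFinset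
      · rw [Finset.sum_eq_single_of_mem (ry y) hmem ?h0]
        case h0 =>
          intro r hrT hne
          apply Set.indicator_of_notMem
          intro hyr
          exact hne (hry3 y r ((hmemT' r).1 hrT).1 hyr)
        rw [Set.indicator_of_mem hme]
        exact hconst y
      · have hzero : f (ry y) * g ((ry y)⁻¹ * x) = 0 := by
          by_contra h0
          exact hmem ((hmemT' _).2 ⟨hry1 y, h0⟩)
        rw [hconst y, hzero]
        symm
        refine Finset.sum_eq_zero fun r hrT => ?_
        apply Set.indicator_of_notMem
        intro hyr
        exact hmem ((hry3 y r ((hmemT' r).1 hrT).1 hyr) ▸ hrT)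
    have hms : ∀ r : L, MeasurableSet {w : L | r⁻¹ * w ∈ M} :=
      fun r => (hMo.preimage (continuous_const.mul continuous_id)).measurableSet
    have hμr : ∀ r : L, μ {w : L | r⁻¹ * w ∈ M} = 1 := by
      intro r
      have he : {w : L | r⁻¹ * w ∈ M} = (fun w => r⁻¹ * w) ⁻¹' (M : Set L) := rfl
      rw [he, measure_preimage_mul μ r⁻¹ (M : Set L), hμM]
    refine ⟨hTfin.subset fun r hr => ⟨hr.1, hr.2⟩, ?_⟩
    have hfun : (fun y : L => f y * g (y⁻¹ * x)) = fun y =>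
        ∑ r ∈ hTfin.toFinset, Set.indicator {w : L | r⁻¹ * w ∈ M}
          (fun _ => f r * g (r⁻¹ * x)) y := funext hdec
    rw [finsum_mem_eq_sum _ hTfin]
    calc ∫ y, f y * g (y⁻¹ * x) ∂μ
        = ∫ y, ∑ r ∈ hTfin.toFinset, Set.indicator {w : L | r⁻¹ * w ∈ M}
            (fun _ => f r * g (r⁻¹ * x)) y ∂μ :=
          integral_congr_ae (Filter.Eventually.of_forall hdec)
      _ = ∑ r ∈ hTfin.toFinset, ∫ y, Set.indicator {w : L | r⁻¹ * w ∈ M}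
            (fun _ => f r * g (r⁻¹ * x)) y ∂μ :=
          integral_finset_sum _ (fun r _ => (integrable_indicator_iff (hms r)).2
            (integrableOn_const (by rw [hμr r]; exact ENNReal.one_ne_top)))
      _ = ∑ r ∈ hTfin.toFinset, f r * g (r⁻¹ * x) := by
          refine Finset.sum_congr rfl fun r _ => ?_
          rw [integral_indicator_const _ (hms r), measureReal_def, hμr r, ENNReal.toReal_one, one_smul]
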